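/- The polynomial 9Z^6 − 27Z^5 − 45Z^4 + 195Z^3 − 20Z^2 − 372Z + 276 has no real roots. -/
import Mathlib
theorem stmt_6 :
    ∀ x : ℝ, 9 * x ^ 6 - 27 * x ^ 5 - 45 * x ^ 4 + 195 * x ^ 3 - 20 * x ^ 2
      - 372 * x + 276 ≠ 0 := by
  intro x
  nlinarith [sq_nonneg (60*x^3 - 90*x^2 - 225*x + 328), sq_nonneg (30*x^2 - 31*x - 20), sq_nonneg (327*x - 610)]
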